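/- Let Y be a metric space which is also a real vector space, λ > 0, and let π : X → Y be a quotient map satisfying condition (★) with exponent λ, where either X = ℝ, or X = ℝ^s with the Euclidean norm and every fiber of π is contained in an affine line. Let φ and ψ be intrinsically L-Lipschitz sections of π, and suppose there exists c ≥ 1 such that dist(π⁻¹(y), π⁻¹(z)) ≥ (1/c)·dist(f(y), π⁻¹(z)) for all y, z ∈ Y and for both f = φ and f = ψ. Then for the section η := φ + ψ of (1/2)·π one has the Leibniz-type bound Ils_{(1/2)π}(η)(y) ≤ (c / 2^{1/λ}) · ( Ils_π(φ)(y) + Ils_π(ψ)(y) ) for every y ∈ Y, where Ils_{(1/2)π}(η) is the intrinsic slope computed with the fibers {x ∈ X : π(x) = 2y}. -/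

import Mathlib

/-- Signed power: `α^[λ] := sign(α)·|α|^λ`. -/
noncomputable def spow (α lam : ℝ) : ℝ := Real.sign α * |α| ^ lam

/-- The intrinsic slope at `ȳ` of a section `φ : Y → X`, computed with respect to a
family of fibers `F : Y → Set X`. -/
noncomputable def IlsFib {X Y : Type*} [MetricSpace X] [MetricSpace Y]
    (F : Y → Set X) (φ : Y → X) (ybar : Y) : ℝ :=
  ⨅ r : {r : ℝ // 0 < r},
    sSup ((fun y => dist (φ ybar) (φ y) / Metric.infDist (φ ybar) (F y)) ''
      (Metric.ball ybar r \ {ybar}))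

/-- Distance between two subsets of a metric space: `inf{d(a,b) : a ∈ A, b ∈ B}`. -/
noncomputable def setDist {X : Type*} [MetricSpace X] (A B : Set X) : ℝ :=
  sInf (Set.image2 dist A B)

private lemma le_infDist_aux {X : Type*} [MetricSpace X] {s : Set X} (hs : s.Nonempty)
    {x : X} {b : ℝ} (h : ∀ w ∈ s, b ≤ dist x w) : b ≤ Metric.infDist x s := by
  by_contra h'
  push_neg at h'
  obtain ⟨w, hw, hlt⟩ := (Metric.infDist_lt_iff hs).1 h'
  exact absurd (h w hw) (not_le.2 hlt)

/-- Leibniz formula: if `π : ℝ^s → Y` is a quotient map satisfying (★) with exponent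
`λ > 0`, where either `s = 1` or each fiber is contained in an affine line, `φ, ψ` are
intrinsically `L`-Lipschitz sections of `π`, and `c ≥ 1` satisfies
`d(π⁻¹(y),π⁻¹(z)) ≥ (1/c)·d(f(y),π⁻¹(z))` for `f = φ, ψ`, then for `η := φ + ψ`,
`Ils_{(1/2)π}(η)(y) ≤ (c/2^{1/λ})·(Ils_π(φ)(y) + Ils_π(ψ)(y))` for every `y`. -/
theorem statement_5 {s : ℕ} {Y : Type*} [MetricSpace Y] [AddCommGroup Y] [Module ℝ Y]
    (lam : ℝ) (hlam : 0 < lam)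
    (π : EuclideanSpace ℝ (Fin s) → Y)
    (hcont : Continuous π) (hopen : IsOpenMap π) (hsurj : Function.Surjective π)
    (hstar : ∀ x₁ x₂ : EuclideanSpace ℝ (Fin s), ∀ α β : ℝ, (α, β) ≠ (0, 0) →
      π (α • x₁ + β • x₂) = spow α lam • π x₁ + spow β lam • π x₂)
    (hcase : s = 1 ∨ ∀ y : Y, ∃ a v : EuclideanSpace ℝ (Fin s), v ≠ 0 ∧
      π ⁻¹' {y} ⊆ {x | ∃ t : ℝ, x = a + t • v})
    (L : ℝ) (hL : 1 ≤ L)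
    (φ ψ : Y → EuclideanSpace ℝ (Fin s))
    (hφsec : ∀ y, π (φ y) = y) (hψsec : ∀ y, π (ψ y) = y)
    (hφlip : ∀ y₁ y₂ : Y, dist (φ y₁) (φ y₂) ≤ L * Metric.infDist (φ y₁) (π ⁻¹' {y₂}))
    (hψlip : ∀ y₁ y₂ : Y, dist (ψ y₁) (ψ y₂) ≤ L * Metric.infDist (ψ y₁) (π ⁻¹' {y₂}))
    (c : ℝ) (hc : 1 ≤ c)
    (hcφ : ∀ y z : Y, setDist (π ⁻¹' {y}) (π ⁻¹' {z}) ≥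
      c⁻¹ * Metric.infDist (φ y) (π ⁻¹' {z}))
    (hcψ : ∀ y z : Y, setDist (π ⁻¹' {y}) (π ⁻¹' {z}) ≥
      c⁻¹ * Metric.infDist (ψ y) (π ⁻¹' {z})) :
    ∀ y : Y, IlsFib (fun z => {x | π x = (2 : ℝ) • z}) (fun z => φ z + ψ z) y ≤
      c / (2 : ℝ) ^ (1 / lam) *
        (IlsFib (fun z => π ⁻¹' {z}) φ y + IlsFib (fun z => π ⁻¹' {z}) ψ y) := by
  intro y
  have hc0 : (0:ℝ) < c := lt_of_lt_of_le one_pos hc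
  set β : ℝ := (2:ℝ) ^ (1 / lam) with hβdef
  have hβ : 0 < β := Real.rpow_pos_of_pos two_pos _
  set K : ℝ := c / β with hKdef
  have hK : 0 < K := div_pos hc0 hβ
  set α : ℝ := (2:ℝ) ^ (-(1 / lam)) with hαdef
  have hα : 0 < α := Real.rpow_pos_of_pos two_pos _
  have hβα : β * α = 1 := by
    rw [hβdef, hαdef, ← Real.rpow_add two_pos]
    simp
  -- spow of a positive real
  have hspow_pos : ∀ t : ℝ, 0 < t → spow t lam = t ^ lam := by
    intro t ht
    rw [spow, Real.sign_of_pos ht, abs_of_pos ht, one_mul]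
  have hspow_zero : spow 0 lam = 0 := by
    rw [spow, Real.sign_zero, zero_mul]
  have hαlam : spow α lam = 1 / 2 := by
    have he : (-(1 / lam)) * lam = -1 := by field_simp
    rw [hspow_pos α hα, hαdef, ← Real.rpow_mul (by norm_num : (0:ℝ) ≤ 2), he,
      Real.rpow_neg_one]
    norm_num
  -- fibers
  have hfib_ne : ∀ z : Y, (π ⁻¹' {z}).Nonempty := fun z => by
    obtain ⟨x, hx⟩ := hsurj z; exact ⟨x, hx⟩
  have hfib_cl : ∀ z : Y, IsClosed (π ⁻¹' {z}) := fun z =>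
    isClosed_singleton.preimage hcont
  have hF_ne : ∀ z : Y, {x : EuclideanSpace ℝ (Fin s) | π x = (2:ℝ) • z}.Nonempty := fun z => by
    obtain ⟨x, hx⟩ := hsurj ((2:ℝ) • z); exact ⟨x, hx⟩
  -- positivity of denominators
  have hdφ : ∀ z : Y, z ≠ y → 0 < Metric.infDist (φ y) (π ⁻¹' {z}) := by
    intro z hz
    refine ((hfib_cl z).notMem_iff_infDist_pos (hfib_ne z)).1 ?_
    simp only [Set.mem_preimage, Set.mem_singleton_iff, hφsec]
    exact hz.symm
  have hdψ : ∀ z : Y, z ≠ y → 0 < Metric.infDist (ψ y) (π ⁻¹' {z}) := by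
    intro z hz
    refine ((hfib_cl z).notMem_iff_infDist_pos (hfib_ne z)).1 ?_
    simp only [Set.mem_preimage, Set.mem_singleton_iff, hψsec]
    exact hz.symm
  -- the midpoint-type element
  have hm : π (α • (φ y + ψ y)) = y := by
    rw [smul_add, hstar _ _ α α (by simp [ne_of_gt hα]), hφsec, hψsec, hαlam,
      ← add_smul]
    norm_num
  -- key lower bound on the distance to the fiber of (1/2)π
  have hD : ∀ z : Y, β * setDist (π ⁻¹' {y}) (π ⁻¹' {z}) ≤
      Metric.infDist (φ y + ψ y) {x | π x = (2:ℝ) • z} := by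
    intro z
    refine le_infDist_aux (hF_ne z) ?_
    intro w hw
    have hu : π (α • w) = z := by
      have : π (α • w + (0:ℝ) • w) = spow α lam • π w + spow 0 lam • π w :=
        hstar w w α 0 (by simp [ne_of_gt hα])
      simp only [zero_smul, add_zero] at this
      rw [this, hαlam, hspow_zero, zero_smul, add_zero, hw, smul_smul]
      norm_num
    have hsd : setDist (π ⁻¹' {y}) (π ⁻¹' {z}) ≤ dist (α • (φ y + ψ y)) (α • w) := by
      refine csInf_le ⟨0, ?_⟩ ?_
      · rintro d ⟨a, _, b, _, rfl⟩
        exact dist_nonneg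
      · exact ⟨α • (φ y + ψ y), hm, α • w, hu, rfl⟩
    have hdist : dist (φ y + ψ y) w = β * dist (α • (φ y + ψ y)) (α • w) := by
      rw [dist_smul₀, Real.norm_eq_abs, abs_of_pos hα, ← mul_assoc, hβα, one_mul]
    rw [hdist]
    exact mul_le_mul_of_nonneg_left hsd hβ.le
  -- pointwise ratio bound
  have hratio : ∀ z : Y, z ≠ y →
      dist (φ y + ψ y) (φ z + ψ z) / Metric.infDist (φ y + ψ y) {x | π x = (2:ℝ) • z} ≤
      K * (dist (φ y) (φ z) / Metric.infDist (φ y) (π ⁻¹' {z})) +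
      K * (dist (ψ y) (ψ z) / Metric.infDist (ψ y) (π ⁻¹' {z})) := by
    intro z hz
    set D := Metric.infDist (φ y + ψ y) {x | π x = (2:ℝ) • z} with hDdef
    have hDφ : β * (c⁻¹ * Metric.infDist (φ y) (π ⁻¹' {z})) ≤ D :=
      le_trans (mul_le_mul_of_nonneg_left (hcφ y z) hβ.le) (hD z)
    have hDψ : β * (c⁻¹ * Metric.infDist (ψ y) (π ⁻¹' {z})) ≤ D :=
      le_trans (mul_le_mul_of_nonneg_left (hcψ y z) hβ.le) (hD z)
    have hbφ : 0 < β * (c⁻¹ * Metric.infDist (φ y) (π ⁻¹' {z})) :=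
      mul_pos hβ (mul_pos (inv_pos.2 hc0) (hdφ z hz))
    have hbψ : 0 < β * (c⁻¹ * Metric.infDist (ψ y) (π ⁻¹' {z})) :=
      mul_pos hβ (mul_pos (inv_pos.2 hc0) (hdψ z hz))
    have hDpos : 0 < D := lt_of_lt_of_le hbφ hDφ
    have h1 : dist (φ y + ψ y) (φ z + ψ z) / D ≤
        dist (φ y) (φ z) / D + dist (ψ y) (ψ z) / D := by
      rw [← add_div]
      gcongr
      exact dist_add_add_le _ _ _ _
    have h2 : dist (φ y) (φ z) / D ≤
        K * (dist (φ y) (φ z) / Metric.infDist (φ y) (π ⁻¹' {z})) := by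
      have e : K * (dist (φ y) (φ z) / Metric.infDist (φ y) (π ⁻¹' {z})) =
          dist (φ y) (φ z) / (β * (c⁻¹ * Metric.infDist (φ y) (π ⁻¹' {z}))) := by
        rw [hKdef]
        field_simp
      rw [e]
      exact div_le_div_of_nonneg_left dist_nonneg hbφ hDφ
    have h3 : dist (ψ y) (ψ z) / D ≤
        K * (dist (ψ y) (ψ z) / Metric.infDist (ψ y) (π ⁻¹' {z})) := by
      have e : K * (dist (ψ y) (ψ z) / Metric.infDist (ψ y) (π ⁻¹' {z})) =
          dist (ψ y) (ψ z) / (β * (c⁻¹ * Metric.infDist (ψ y) (π ⁻¹' {z}))) := by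
        rw [hKdef]
        field_simp
      rw [e]
      exact div_le_div_of_nonneg_left dist_nonneg hbψ hDψ
    exact h1.trans (add_le_add h2 h3)
  -- the three sup functions
  set Sφ : {r : ℝ // 0 < r} → ℝ := fun r =>
    sSup ((fun z => dist (φ y) (φ z) / Metric.infDist (φ y) (π ⁻¹' {z})) ''
      (Metric.ball y r \ {y})) with hSφdef
  set Sψ : {r : ℝ // 0 < r} → ℝ := fun r =>
    sSup ((fun z => dist (ψ y) (ψ z) / Metric.infDist (ψ y) (π ⁻¹' {z})) ''
      (Metric.ball y r \ {y})) with hSψdef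
  set Sη : {r : ℝ // 0 < r} → ℝ := fun r =>
    sSup ((fun z => dist (φ y + ψ y) (φ z + ψ z) /
      Metric.infDist (φ y + ψ y) {x | π x = (2:ℝ) • z}) ''
      (Metric.ball y r \ {y})) with hSηdef
  have hSφ_nonneg : ∀ r, 0 ≤ Sφ r := by
    intro r
    refine Real.sSup_nonneg ?_
    rintro x ⟨z, hz, rfl⟩
    exact div_nonneg dist_nonneg Metric.infDist_nonneg
  have hSψ_nonneg : ∀ r, 0 ≤ Sψ r := by
    intro r
    refine Real.sSup_nonneg ?_
    rintro x ⟨z, hz, rfl⟩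
    exact div_nonneg dist_nonneg Metric.infDist_nonneg
  have hSη_nonneg : ∀ r, 0 ≤ Sη r := by
    intro r
    refine Real.sSup_nonneg ?_
    rintro x ⟨z, hz, rfl⟩
    exact div_nonneg dist_nonneg Metric.infDist_nonneg
  -- boundedness of the φ and ψ sup sets
  have hbddφ : ∀ r : {r : ℝ // 0 < r}, BddAbove
      ((fun z => dist (φ y) (φ z) / Metric.infDist (φ y) (π ⁻¹' {z})) ''
        (Metric.ball y r \ {y})) := by
    intro r
    refine ⟨L, ?_⟩
    rintro x ⟨z, hz, rfl⟩
    have hzy : z ≠ y := hz.2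
    rw [div_le_iff₀ (hdφ z hzy)]
    exact hφlip y z
  have hbddψ : ∀ r : {r : ℝ // 0 < r}, BddAbove
      ((fun z => dist (ψ y) (ψ z) / Metric.infDist (ψ y) (π ⁻¹' {z})) ''
        (Metric.ball y r \ {y})) := by
    intro r
    refine ⟨L, ?_⟩
    rintro x ⟨z, hz, rfl⟩
    have hzy : z ≠ y := hz.2
    rw [div_le_iff₀ (hdψ z hzy)]
    exact hψlip y z
  -- per-radius bound
  have hSr : ∀ r : {r : ℝ // 0 < r}, Sη r ≤ K * (Sφ r + Sψ r) := by
    intro r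
    refine Real.sSup_le ?_ ?_
    · rintro x ⟨z, hz, rfl⟩
      have hzy : z ≠ y := hz.2
      refine (hratio z hzy).trans ?_
      have l1 : dist (φ y) (φ z) / Metric.infDist (φ y) (π ⁻¹' {z}) ≤ Sφ r :=
        le_csSup (hbddφ r) ⟨z, hz, rfl⟩
      have l2 : dist (ψ y) (ψ z) / Metric.infDist (ψ y) (π ⁻¹' {z}) ≤ Sψ r :=
        le_csSup (hbddψ r) ⟨z, hz, rfl⟩
      calc K * (dist (φ y) (φ z) / Metric.infDist (φ y) (π ⁻¹' {z})) +
            K * (dist (ψ y) (ψ z) / Metric.infDist (ψ y) (π ⁻¹' {z}))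
          ≤ K * Sφ r + K * Sψ r := by
            exact add_le_add (mul_le_mul_of_nonneg_left l1 hK.le)
              (mul_le_mul_of_nonneg_left l2 hK.le)
        _ = K * (Sφ r + Sψ r) := by ring
    · exact mul_nonneg hK.le (add_nonneg (hSφ_nonneg r) (hSψ_nonneg r))
  -- monotonicity
  have hmonoφ : ∀ r₁ r₂ : {r : ℝ // 0 < r}, (r₁ : ℝ) ≤ r₂ → Sφ r₁ ≤ Sφ r₂ := by
    intro r₁ r₂ h
    refine Real.sSup_le ?_ (hSφ_nonneg r₂)
    rintro x ⟨z, hz, rfl⟩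
    exact le_csSup (hbddφ r₂)
      ⟨z, ⟨Metric.ball_subset_ball h hz.1, hz.2⟩, rfl⟩
  have hmonoψ : ∀ r₁ r₂ : {r : ℝ // 0 < r}, (r₁ : ℝ) ≤ r₂ → Sψ r₁ ≤ Sψ r₂ := by
    intro r₁ r₂ h
    refine Real.sSup_le ?_ (hSψ_nonneg r₂)
    rintro x ⟨z, hz, rfl⟩
    exact le_csSup (hbddψ r₂)
      ⟨z, ⟨Metric.ball_subset_ball h hz.1, hz.2⟩, rfl⟩
  -- assemble
  haveI : Nonempty {r : ℝ // 0 < r} := ⟨⟨1, one_pos⟩⟩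
  have hgoal : (⨅ r : {r : ℝ // 0 < r}, Sη r) ≤
      K * ((⨅ r : {r : ℝ // 0 < r}, Sφ r) + (⨅ r : {r : ℝ // 0 < r}, Sψ r)) := by
    refine le_of_forall_pos_le_add ?_
    intro ε hε
    have hδ : 0 < ε / (2 * K) := div_pos hε (by positivity)
    have hφlt : (⨅ r : {r : ℝ // 0 < r}, Sφ r) <
        (⨅ r : {r : ℝ // 0 < r}, Sφ r) + ε / (2 * K) := lt_add_of_pos_right _ hδ
    have hψlt : (⨅ r : {r : ℝ // 0 < r}, Sψ r) <
        (⨅ r : {r : ℝ // 0 < r}, Sψ r) + ε / (2 * K) := lt_add_of_pos_right _ hδ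
    obtain ⟨r₁, hr₁⟩ := exists_lt_of_ciInf_lt hφlt
    obtain ⟨r₂, hr₂⟩ := exists_lt_of_ciInf_lt hψlt
    set r : {r : ℝ // 0 < r} := ⟨min r₁ r₂, lt_min r₁.2 r₂.2⟩ with hrdef
    have hbb : BddBelow (Set.range Sη) := ⟨0, by rintro x ⟨r', rfl⟩; exact hSη_nonneg r'⟩
    calc (⨅ r : {r : ℝ // 0 < r}, Sη r) ≤ Sη r := ciInf_le hbb r
      _ ≤ K * (Sφ r + Sψ r) := hSr r
      _ ≤ K * (((⨅ r : {r : ℝ // 0 < r}, Sφ r) + ε / (2 * K)) +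
            ((⨅ r : {r : ℝ // 0 < r}, Sψ r) + ε / (2 * K))) := by
          refine mul_le_mul_of_nonneg_left (add_le_add ?_ ?_) hK.le
          · exact (hmonoφ r r₁ (min_le_left _ _)).trans hr₁.le
          · exact (hmonoψ r r₂ (min_le_right _ _)).trans hr₂.le
      _ = K * ((⨅ r : {r : ℝ // 0 < r}, Sφ r) + (⨅ r : {r : ℝ // 0 < r}, Sψ r)) + ε := by
          field_simp
          ring
  simpa [IlsFib, hSφdef, hSψdef, hSηdef, hKdef] using hgoal
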